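/- arXiv:math/0612088 — 3 statements merged into one kernel-verified Lean document; each statement's English description precedes it below -/
import Mathlib

section
/- Let N = (X,T,w,w') be a Petri net and Φ(N) its associated commutative word rewriting system. The map φ sending a marking μ : X → ℕ to the element φ(μ) = Σ_{x∈X} μ(x)·x of [X], and sending the arrow of G(N) given by a transition α applicable at μ (i.e. with μ →_α ν) to the arrow (c,α) of G(Φ(N)) where c = Σ_{x∈X} (μ(x) − w(x,α))·x, is an isomorphism of graphs from G(N) to G(Φ(N)). -/
/-- A Petri net on a set `X` of places and a set `T` of transitions. -/
structure PetriNet (X T : Type) where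
  w : X → T → ℕ
  w' : T → X → ℕ

/-- A commutative word rewriting system with alphabet `X` and rules indexed by `A`. -/
structure CWRS (X A : Type) where
  src : A → X →₀ ℕ
  tgt : A → X →₀ ℕ

/-- The translation `Φ` from Petri nets to commutative word rewriting systems. -/
noncomputable def Phi {X T : Type} [Fintype X] (N : PetriNet X T) : CWRS X T where
  src α := Finsupp.equivFunOnFinite.symm fun x => N.w x α
  tgt α := Finsupp.equivFunOnFinite.symm fun x => N.w' α x

/-- Arrows of the reduction graph `G(N)` of a Petri net from marking `μ` to
marking `ν`: a transition `α` with `μ →_α ν`, i.e. `w(x,α) ≤ μ(x)` for all `x`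
and `ν(x) = μ(x) - w(x,α) + w'(α,x)`. -/
def PetriStep {X T : Type} (N : PetriNet X T) (μ ν : X → ℕ) : Type :=
  {α : T // (∀ x, N.w x α ≤ μ x) ∧ ∀ x, ν x = μ x - N.w x α + N.w' α x}

/-- Arrows of the reduction graph `G(X,R)` of a commutative word rewriting system
from `a` to `b`: a pair `(c, α)` of a context `c ∈ [X]` and a rule `α` with
`a = c + s(α)` and `b = c + t(α)`. -/
def CwrsStep {X A : Type} (S : CWRS X A) (a b : X →₀ ℕ) : Type :=
  {p : (X →₀ ℕ) × A // a = p.1 + S.src p.2 ∧ b = p.1 + S.tgt p.2}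

/-- The object part of `φ`: a marking `μ` is sent to `Σ_x μ(x)·x ∈ [X]`. -/
noncomputable def phi0 {X : Type} [Fintype X] : (X → ℕ) → (X →₀ ℕ) :=
  fun μ => Finsupp.equivFunOnFinite.symm μ

/-- The arrow part of `φ`: the arrow of `G(N)` given by a transition `α`
applicable at `μ` is sent to the arrow `(c, α)` of `G(Φ(N))` where
`c = Σ_x (μ(x) - w(x,α))·x`. -/
noncomputable def phiStep {X T : Type} [Fintype X] (N : PetriNet X T) {μ ν : X → ℕ}
    (f : PetriStep N μ ν) : CwrsStep (Phi N) (phi0 μ) (phi0 ν) :=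
  ⟨(Finsupp.equivFunOnFinite.symm fun x => μ x - N.w x f.1, f.1), by
    obtain ⟨α, h1, h2⟩ := f
    constructor <;> ext x <;>
      · have hx1 := h1 x
        have hx2 := h2 x
        simp [phi0, Phi, Finsupp.add_apply]
        omega⟩

/-- The map `φ`, sending a marking `μ : X → ℕ` to `Σ_x μ(x)·x ∈ [X]` and the
arrow of `G(N)` given by a transition `α` applicable at `μ` to the arrow
`(Σ_x (μ(x) - w(x,α))·x, α)` of `G(Φ(N))`, is an isomorphism of graphs from
`G(N)` to `G(Φ(N))`: it is bijective on objects and bijective on each set of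
arrows (it respects sources and targets by construction). -/
theorem phi_graph_iso {X T : Type} [Fintype X] [Fintype T] (N : PetriNet X T) :
    Function.Bijective (phi0 (X := X)) ∧
      ∀ μ ν : X → ℕ, Function.Bijective fun f : PetriStep N μ ν => phiStep N f := by
  refine ⟨Finsupp.equivFunOnFinite.symm.bijective, fun μ ν => ⟨?_, ?_⟩⟩
  · rintro ⟨α, h⟩ ⟨β, h'⟩ heq
    have : α = β := congrArg (fun g => g.1.2) heq
    exact Subtype.ext this
  · rintro ⟨⟨c, α⟩, hc1, hc2⟩
    have hc1' : ∀ x, μ x = c x + N.w x α := fun x => by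
      have := DFunLike.congr_fun hc1 x
      simpa [phi0, Phi] using this
    have hc2' : ∀ x, ν x = c x + N.w' α x := fun x => by
      have := DFunLike.congr_fun hc2 x
      simpa [phi0, Phi] using this
    refine ⟨⟨α, fun x => by have := hc1' x; omega,
      fun x => by have := hc1' x; have := hc2' x; omega⟩, ?_⟩
    apply Subtype.ext
    simp only [phiStep]
    ext1
    · ext x
      have := hc1' x
      simp
      omega
    · rfl
end

section
/- Let N = (X,T,w,w') be a Petri net, Φ(N) its associated commutative word rewriting system, and φ : G(N) → G(Φ(N)) the graph isomorphism sending a marking μ to Σ_{x∈X} μ(x)·x and the arrow given by a transition α applicable at μ to the arrow (Σ_{x∈X}(μ(x)−w(x,α))·x, α). Then for any two parallel paths p, q in G(N), one has p ≡_N q if and only if φ(p) ≡_{Φ(N)} φ(q); i.e. φ identifies the congruence ≡_N with the congruence ≡_{Φ(N)}. -/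
universe u u' v v'

/-- Paths in a graph given by a family of arrow types `Hom`. -/
inductive GPath {Obj : Type u} (Hom : Obj → Obj → Type v) : Obj → Obj → Type (max u v)
  | nil {a : Obj} : GPath Hom a a
  | cons {a b c : Obj} (f : Hom a b) (p : GPath Hom b c) : GPath Hom a c

/-- Composition (concatenation) of paths. -/
def GPath.comp {Obj : Type u} {Hom : Obj → Obj → Type v} :
    ∀ {a b c : Obj}, GPath Hom a b → GPath Hom b c → GPath Hom a c
  | _, _, _, .nil, q => q
  | _, _, _, .cons f p, q => .cons f (p.comp q)

/-- Image of a path under a graph morphism. -/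
def GPath.map {Obj : Type u} {Obj' : Type u'} {Hom : Obj → Obj → Type v}
    {Hom' : Obj' → Obj' → Type v'} (F0 : Obj → Obj')
    (F1 : ∀ {a b : Obj}, Hom a b → Hom' (F0 a) (F0 b)) :
    ∀ {a b : Obj}, GPath Hom a b → GPath Hom' (F0 a) (F0 b)
  | _, _, .nil => .nil
  | _, _, .cons f p => .cons (F1 f) (GPath.map F0 F1 p)

/-- The congruence `≡_N` on parallel paths of `G(N)`: the smallest equivalence
relation, compatible with path composition, identifying the two-step paths
`μ₁ →_α ν₁ →_β μ₂` and `μ₁ →_β ν₂ →_α μ₂` whenever there is a marking `ρ` with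
`μ₁ = ρ + w(-,α) + w(-,β)`, `ν₁ = ρ + w'(α,-) + w(-,β)`,
`ν₂ = ρ + w(-,α) + w'(β,-)`, `μ₂ = ρ + w'(α,-) + w'(β,-)` pointwise. -/
inductive PetriCong {X T : Type} (N : PetriNet X T) :
    ∀ {μ ν : X → ℕ}, GPath (PetriStep N) μ ν → GPath (PetriStep N) μ ν → Prop
  | square {μ₁ ν₁ ν₂ μ₂ : X → ℕ} (ρ : X → ℕ) (α β : T)
      (f₁ : PetriStep N μ₁ ν₁) (g₁ : PetriStep N ν₁ μ₂)
      (f₂ : PetriStep N μ₁ ν₂) (g₂ : PetriStep N ν₂ μ₂)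
      (hf₁ : f₁.1 = α) (hg₁ : g₁.1 = β) (hf₂ : f₂.1 = β) (hg₂ : g₂.1 = α)
      (hμ₁ : ∀ x, μ₁ x = ρ x + N.w x α + N.w x β)
      (hν₁ : ∀ x, ν₁ x = ρ x + N.w' α x + N.w x β)
      (hν₂ : ∀ x, ν₂ x = ρ x + N.w x α + N.w' β x)
      (hμ₂ : ∀ x, μ₂ x = ρ x + N.w' α x + N.w' β x) :
      PetriCong N (.cons f₁ (.cons g₁ .nil)) (.cons f₂ (.cons g₂ .nil))
  | refl {μ ν : X → ℕ} (p : GPath (PetriStep N) μ ν) : PetriCong N p p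
  | symm {μ ν : X → ℕ} {p q : GPath (PetriStep N) μ ν} :
      PetriCong N p q → PetriCong N q p
  | trans {μ ν : X → ℕ} {p q r : GPath (PetriStep N) μ ν} :
      PetriCong N p q → PetriCong N q r → PetriCong N p r
  | comp {μ ν ξ : X → ℕ} {p p' : GPath (PetriStep N) μ ν} {q q' : GPath (PetriStep N) ν ξ} :
      PetriCong N p p' → PetriCong N q q' → PetriCong N (p.comp q) (p'.comp q')

/-- The congruence `≡_{(X,R)}` on parallel paths of `G(X,R)`: the smallest
equivalence relation, compatible with path composition, identifying for every
context `c` and rules `α`, `β` the path `(c+s(β),α)` followed by `(c+t(α),β)`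
with the path `(c+s(α),β)` followed by `(c+t(β),α)`. -/
inductive CwrsCong {X A : Type} (S : CWRS X A) :
    ∀ {a b : X →₀ ℕ}, GPath (CwrsStep S) a b → GPath (CwrsStep S) a b → Prop
  | square {a m₁ m₂ b : X →₀ ℕ} (c : X →₀ ℕ) (α β : A)
      (f₁ : CwrsStep S a m₁) (g₁ : CwrsStep S m₁ b)
      (f₂ : CwrsStep S a m₂) (g₂ : CwrsStep S m₂ b)
      (hf₁ : f₁.1 = (c + S.src β, α)) (hg₁ : g₁.1 = (c + S.tgt α, β))
      (hf₂ : f₂.1 = (c + S.src α, β)) (hg₂ : g₂.1 = (c + S.tgt β, α)) :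
      CwrsCong S (.cons f₁ (.cons g₁ .nil)) (.cons f₂ (.cons g₂ .nil))
  | refl {a b : X →₀ ℕ} (p : GPath (CwrsStep S) a b) : CwrsCong S p p
  | symm {a b : X →₀ ℕ} {p q : GPath (CwrsStep S) a b} :
      CwrsCong S p q → CwrsCong S q p
  | trans {a b : X →₀ ℕ} {p q r : GPath (CwrsStep S) a b} :
      CwrsCong S p q → CwrsCong S q r → CwrsCong S p r
  | comp {a b c : X →₀ ℕ} {p p' : GPath (CwrsStep S) a b} {q q' : GPath (CwrsStep S) b c} :
      CwrsCong S p p' → CwrsCong S q q' → CwrsCong S (p.comp q) (p'.comp q')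

section Aux

variable {X T : Type} [Fintype X] (N : PetriNet X T)

/-- Inverse arrow part. -/
noncomputable def psiStep {a b : X →₀ ℕ} (g : CwrsStep (Phi N) a b) :
    PetriStep N (⇑a) (⇑b) :=
  ⟨g.1.2, by
    obtain ⟨⟨c, α⟩, ha, hb⟩ := g
    subst ha; subst hb
    constructor <;> intro x <;> simp [Phi, Finsupp.add_apply]⟩

theorem GPath.map_comp {Obj : Type u} {Obj' : Type u'} {Hom : Obj → Obj → Type v}
    {Hom' : Obj' → Obj' → Type v'} (F0 : Obj → Obj')
    (F1 : ∀ {a b : Obj}, Hom a b → Hom' (F0 a) (F0 b)) :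
    ∀ {a b c : Obj} (p : GPath Hom a b) (q : GPath Hom b c),
      (p.comp q).map F0 F1 = (p.map F0 F1).comp (q.map F0 F1)
  | _, _, _, .nil, q => rfl
  | _, _, _, .cons f p, q => by
      simp [GPath.map, GPath.comp, GPath.map_comp F0 F1 p q]

theorem petriCong_map {μ ν : X → ℕ} {p q : GPath (PetriStep N) μ ν}
    (h : PetriCong N p q) :
    CwrsCong (Phi N) (p.map phi0 fun {_ _} f => phiStep N f)
      (q.map phi0 fun {_ _} f => phiStep N f) := by
  induction h with
  | square ρ α β f₁ g₁ f₂ g₂ hf₁ hg₁ hf₂ hg₂ hμ₁ hν₁ hν₂ hμ₂ =>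
    refine CwrsCong.square (phi0 ρ) α β _ _ _ _ ?_ ?_ ?_ ?_ <;>
      simp only [GPath.map, phiStep] <;>
      refine Prod.ext ?_ (by assumption) <;>
      ext x <;>
      simp only [phi0, Phi, Finsupp.add_apply, Finsupp.coe_equivFunOnFinite_symm]
    · rw [hf₁]; have := hμ₁ x; omega
    · rw [hg₁]; have := hν₁ x; omega
    · rw [hf₂]; have := hμ₁ x; omega
    · rw [hg₂]; have := hν₂ x; omega
  | refl p => exact .refl _
  | symm _ ih => exact .symm ih
  | trans _ _ ih₁ ih₂ => exact .trans ih₁ ih₂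
  | comp _ _ ih₁ ih₂ =>
    rw [GPath.map_comp, GPath.map_comp]
    exact .comp ih₁ ih₂

theorem cwrsCong_map {a b : X →₀ ℕ} {P Q : GPath (CwrsStep (Phi N)) a b}
    (h : CwrsCong (Phi N) P Q) :
    PetriCong N (P.map (fun m : X →₀ ℕ => (m : X → ℕ)) fun {_ _} g => psiStep N g)
      (Q.map (fun m : X →₀ ℕ => (m : X → ℕ)) fun {_ _} g => psiStep N g) := by
  induction h with
  | square c α β f₁ g₁ f₂ g₂ hf₁ hg₁ hf₂ hg₂ =>
    obtain ⟨p₁, ha₁, hb₁⟩ := f₁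
    obtain ⟨q₁, hc₁, hd₁⟩ := g₁
    obtain ⟨p₂, ha₂, hb₂⟩ := f₂
    obtain ⟨q₂, hc₂, hd₂⟩ := g₂
    simp only at hf₁ hg₁ hf₂ hg₂
    subst hf₁; subst hg₁; subst hf₂; subst hg₂
    refine PetriCong.square (⇑c) α β _ _ _ _ rfl rfl rfl rfl ?_ ?_ ?_ ?_ <;> intro x
    · rw [ha₁]; simp [Phi, Finsupp.add_apply]; try omega
    · rw [hb₁]; simp [Phi, Finsupp.add_apply]; try omega
    · rw [hb₂]; simp [Phi, Finsupp.add_apply]; try omega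
    · rw [hd₁]; simp [Phi, Finsupp.add_apply]; try omega
  | refl p => exact .refl _
  | symm _ ih => exact .symm ih
  | trans _ _ ih₁ ih₂ => exact .trans ih₁ ih₂
  | comp _ _ ih₁ ih₂ =>
    rw [GPath.map_comp, GPath.map_comp]
    exact .comp ih₁ ih₂

theorem map_psi_phi : ∀ {μ ν : X → ℕ} (p : GPath (PetriStep N) μ ν),
    ((p.map phi0 fun {_ _} f => phiStep N f).map (fun m : X →₀ ℕ => (m : X → ℕ))
        fun {_ _} g => psiStep N g) = p
  | _, _, .nil => rfl
  | _, _, .cons f p => by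
      have ih := map_psi_phi p
      show GPath.cons (psiStep N (phiStep N f)) _ = GPath.cons f p
      have hstep : psiStep N (phiStep N f) = f := Subtype.ext rfl
      rw [hstep, ih]
      rfl

end Aux

/-- The graph isomorphism `φ : G(N) → G(Φ(N))` identifies the congruences
`≡_N` and `≡_{Φ(N)}`: two parallel paths `p`, `q` of `G(N)` satisfy `p ≡_N q`
if and only if `φ(p) ≡_{Φ(N)} φ(q)`. -/
theorem phi_cong_iff {X T : Type} [Fintype X] [Fintype T] (N : PetriNet X T)
    {μ ν : X → ℕ} (p q : GPath (PetriStep N) μ ν) :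
    PetriCong N p q ↔
      CwrsCong (Phi N) (p.map phi0 fun {_ _} f => phiStep N f)
        (q.map phi0 fun {_ _} f => phiStep N f) := by
  constructor
  · exact petriCong_map N
  · intro h
    have := cwrsCong_map N h
    rwa [map_psi_phi, map_psi_phi] at this
end

section
/- Let (X,R) be a commutative word rewriting system with X totally ordered and Σ²(X,R) its associated 2-polygraph. The assignments π(u ⊗ τ_{x,y} ⊗ v) = identity of π(u)+x+y+π(v) and π(u ⊗ α ⊗ v) = (π(u)+π(v), α) extend the canonical projection π : X* → [X] to a functor π from the free category on the reduction graph G(Σ²(X,R)) to the free category on the reduction graph G(X,R), and this functor is surjective: it is surjective on objects, and for every pair of objects a,b ∈ [X] and every morphism F : a → b of the free category on G(X,R) there exist objects u,v ∈ X* with π(u)=a, π(v)=b and a morphism f : u → v of the free category on G(Σ²(X,R)) with π(f) = F. -/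
universe u u' v v'

/-- The canonical projection `π : X* → [X]`, sending a word to the sum of its
letters. -/
noncomputable def pi {X : Type} [DecidableEq X] (u : List X) : X →₀ ℕ :=
  Multiset.toFinsupp (u : Multiset X)

/-- The canonical representative word `ā ∈ X*` of `a ∈ [X]`. -/
noncomputable def bar {X : Type} [LinearOrder X] (a : X →₀ ℕ) : List X :=
  (Finsupp.toMultiset a).sort (· ≤ ·)

/-- The 2-cells of the 2-polygraph `Σ²(X,R)`. -/
inductive Cell2 (X A : Type)
  | tau (x y : X) (h : x ≠ y)
  | rule (α : A)

/-- The 1-source of a 2-cell. -/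
noncomputable def src1 {X A : Type} [LinearOrder X] (S : CWRS X A) : Cell2 X A → List X
  | .tau x y _ => [x, y]
  | .rule α => bar (S.src α)

/-- The 1-target of a 2-cell. -/
noncomputable def tgt1 {X A : Type} [LinearOrder X] (S : CWRS X A) : Cell2 X A → List X
  | .tau x y _ => [y, x]
  | .rule α => bar (S.tgt α)

/-- Arrows of the reduction graph `G(Σ²(X,R))` from the word `u` to the word `v`. -/
def PolyStep {X A : Type} [LinearOrder X] (S : CWRS X A) (u v : List X) : Type :=
  {t : List X × Cell2 X A × List X //
    u = t.1 ++ src1 S t.2.1 ++ t.2.2 ∧ v = t.1 ++ tgt1 S t.2.1 ++ t.2.2}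

section AuxDev
variable {X A : Type}

theorem pi_append [DecidableEq X] (u v : List X) : pi (u ++ v) = pi u + pi v := by
  unfold pi; rw [← Multiset.toFinsupp_add]; rfl

theorem pi_nil [DecidableEq X] : pi ([] : List X) = 0 := by
  simp [pi]

theorem pi_perm [DecidableEq X] {u v : List X} (h : u.Perm v) : pi u = pi v := by
  unfold pi; rw [Multiset.coe_eq_coe.mpr h]

theorem perm_of_pi_eq [DecidableEq X] {u v : List X} (h : pi u = pi v) : u.Perm v :=
  Multiset.coe_eq_coe.mp (Multiset.toFinsupp.injective h)

theorem pi_bar [LinearOrder X] (a : X →₀ ℕ) : pi (bar a) = a := by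
  simp [pi, bar]

/-- cast on the target endpoint of a path -/
def GPath.castT {Obj : Type u} {Hom : Obj → Obj → Type v} {a b b' : Obj}
    (h : b = b') (p : GPath Hom a b) : GPath Hom a b' := h ▸ p

theorem GPath.castT_heq {Obj : Type u} {Hom : Obj → Obj → Type v} {a b b' : Obj}
    (h : b = b') (p : GPath Hom a b) : HEq (p.castT h) p := by subst h; rfl

theorem GPath.comp_nil {Obj : Type u} {Hom : Obj → Obj → Type v} {a b : Obj}
    (p : GPath Hom a b) : p.comp .nil = p := by
  induction p with
  | nil => rfl
  | cons f p ih => simp [GPath.comp, ih]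

theorem GPath.comp_assoc {Obj : Type u} {Hom : Obj → Obj → Type v} {a b c d : Obj}
    (p : GPath Hom a b) (q : GPath Hom b c) (r : GPath Hom c d) :
    (p.comp q).comp r = p.comp (q.comp r) := by
  induction p with
  | nil => rfl
  | cons f p ih => simp [GPath.comp, ih]

theorem comp_heq_nil {Obj : Type u} {Hom : Obj → Obj → Type v} {a b c : Obj}
    (hab : a = b) (hbc : b = c) (p : GPath Hom a b) (q : GPath Hom b c)
    (hp : HEq p (GPath.nil : GPath Hom a a)) (hq : HEq q (GPath.nil : GPath Hom b b)) :
    HEq (p.comp q) (GPath.nil : GPath Hom a a) := by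
  subst hbc; subst hab
  rw [eq_of_heq hp, eq_of_heq hq]
  exact heq_of_eq (GPath.comp_nil _)

theorem key_comp {Obj : Type u} {Hom : Obj → Obj → Type v} {a w w' c : Obj}
    (hww' : w = w') (s : GPath Hom a w) (p : GPath Hom w w') (q : GPath Hom w' c)
    (g : Hom a w') (hs : HEq s (GPath.cons g GPath.nil))
    (hp : HEq p (GPath.nil : GPath Hom w w)) :
    s.comp (p.comp q) = GPath.cons g q := by
  subst hww'
  rw [eq_of_heq hs, eq_of_heq hp]
  rfl

theorem heq_cons_nil {Obj : Type u} {Hom : Obj → Obj → Type v} {a w w' : Obj}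
    (h : w = w') (g0 : Hom a w) (g : Hom a w') (hg : HEq g0 g) :
    HEq (GPath.cons g0 (GPath.nil : GPath Hom w w))
        (GPath.cons g (GPath.nil : GPath Hom w' w')) := by
  subst h; rw [eq_of_heq hg]

variable [LinearOrder X] (S : CWRS X A)

theorem pi_step_tau {u v : List X} (h k : List X) (x y : X) (hxy : x ≠ y)
    (hu : u = h ++ src1 S (.tau x y hxy) ++ k) (hv : v = h ++ tgt1 S (.tau x y hxy) ++ k) :
    pi u = pi v := by
  subst hu; subst hv
  apply pi_perm
  simp only [src1, tgt1]
  exact (List.perm_append_right_iff k).mpr ((List.perm_append_left_iff h).mpr (List.Perm.swap' y x .nil))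

/-- image of a single polygraphic step -/
noncomputable def stepPi {u v : List X} (f : PolyStep S u v) : GPath (CwrsStep S) (pi u) (pi v) :=
  match f with
  | ⟨(h, c, k), hp⟩ =>
    match c, hp with
    | .tau x y hxy, hp =>
        GPath.castT (pi_step_tau S h k x y hxy hp.1 hp.2) GPath.nil
    | .rule α, hp =>
        .cons ⟨(pi h + pi k, α), by
          constructor
          · rw [hp.1]; simp only [src1, pi_append, pi_bar]; abel
          · rw [hp.2]; simp only [tgt1, pi_append, pi_bar]; abel⟩ .nil

noncomputable def PiF : ∀ {u v : List X}, GPath (PolyStep S) u v → GPath (CwrsStep S) (pi u) (pi v)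
  | _, _, .nil => .nil
  | _, _, .cons f p => (stepPi S f).comp (PiF p)

theorem PiF_nil {u : List X} : PiF S (.nil : GPath (PolyStep S) u u) = .nil := rfl

theorem PiF_cons {u v w : List X} (f : PolyStep S u v) (p : GPath (PolyStep S) v w) :
    PiF S (.cons f p) = (stepPi S f).comp (PiF S p) := rfl

theorem PiF_comp {u v w : List X} (p : GPath (PolyStep S) u v) (q : GPath (PolyStep S) v w) :
    PiF S (p.comp q) = (PiF S p).comp (PiF S q) := by
  induction p with
  | nil => rfl
  | cons f p ih =>
    show PiF S (.cons f (p.comp q)) = (PiF S (.cons f p)).comp (PiF S q)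
    rw [PiF_cons, PiF_cons, ih, GPath.comp_assoc]

theorem stepPi_tau_heq {u v : List X} (f : PolyStep S u v) (x y : X) (hxy : x ≠ y)
    (hc : f.1.2.1 = Cell2.tau x y hxy) :
    pi u = pi v ∧ HEq (stepPi S f) (GPath.nil : GPath (CwrsStep S) (pi u) (pi u)) := by
  obtain ⟨⟨h, c, k⟩, hp⟩ := f
  cases hc
  exact ⟨pi_step_tau S h k x y hxy hp.1 hp.2, GPath.castT_heq _ _⟩

/-- extend each step with a letter on the left -/
def consStep (x : X) : ∀ {u v : List X}, PolyStep S u v → PolyStep S (x :: u) (x :: v)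
  | _, _, ⟨(h, c, k), h1, h2⟩ => ⟨(x :: h, c, k), by rw [h1]; rfl, by rw [h2]; rfl⟩

def consPath (x : X) : ∀ {u v : List X}, GPath (PolyStep S) u v → GPath (PolyStep S) (x :: u) (x :: v)
  | _, _, .nil => .nil
  | _, _, .cons f p => .cons (consStep S x f) (consPath x p)

def TauOnly : ∀ {u v : List X}, GPath (PolyStep S) u v → Prop
  | _, _, .nil => True
  | _, _, .cons f p => (∃ x y h, f.1.2.1 = Cell2.tau x y h) ∧ TauOnly p

theorem tauOnly_consPath (x : X) :
    ∀ {u v : List X} (p : GPath (PolyStep S) u v), TauOnly S p → TauOnly S (consPath S x p)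
  | _, _, .nil, _ => trivial
  | _, _, .cons f p, hp => ⟨by obtain ⟨⟨h,c,k⟩,h1,h2⟩ := f; exact hp.1, tauOnly_consPath x p hp.2⟩

theorem tauOnly_comp :
    ∀ {u v w : List X} (p : GPath (PolyStep S) u v) (q : GPath (PolyStep S) v w),
      TauOnly S p → TauOnly S q → TauOnly S (p.comp q)
  | _, _, _, .nil, q, _, hq => hq
  | _, _, _, .cons f p, q, hp, hq => ⟨hp.1, tauOnly_comp p q hp.2 hq⟩

theorem tauOnly_piF :
    ∀ {u v : List X} (p : GPath (PolyStep S) u v), TauOnly S p →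
      pi u = pi v ∧ HEq (PiF S p) (GPath.nil : GPath (CwrsStep S) (pi u) (pi u))
  | _, _, .nil, _ => ⟨rfl, HEq.rfl⟩
  | _, _, .cons f p, hp => by
    obtain ⟨⟨x, y, hxy, hc⟩, hrest⟩ := hp
    obtain ⟨h1, h2⟩ := stepPi_tau_heq S f x y hxy hc
    obtain ⟨h3, h4⟩ := tauOnly_piF p hrest
    rw [PiF_cons]
    exact ⟨h1.trans h3, comp_heq_nil h1 h3 _ _ h2 h4⟩

theorem perm_lift : ∀ {u v : List X}, u.Perm v →
    ∃ p : GPath (PolyStep S) u v, TauOnly S p := by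
  intro u v h
  induction h with
  | nil => exact ⟨.nil, trivial⟩
  | cons x _ ih =>
    obtain ⟨p, hp⟩ := ih
    exact ⟨consPath S x p, tauOnly_consPath S x p hp⟩
  | swap x y l =>
    rcases eq_or_ne y x with rfl | hxy
    · exact ⟨.nil, trivial⟩
    · exact ⟨.cons ⟨([], Cell2.tau y x hxy, l), rfl, rfl⟩ .nil, ⟨y, x, hxy, rfl⟩, trivial⟩
  | trans _ _ ih1 ih2 =>
    obtain ⟨p, hp⟩ := ih1
    obtain ⟨q, hq⟩ := ih2
    exact ⟨p.comp q, tauOnly_comp S p q hp hq⟩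

theorem cwrs_heq {a w w' : X →₀ ℕ} (h : w = w') (g0 : CwrsStep S a w) (g : CwrsStep S a w')
    (hval : g0.1 = g.1) : HEq g0 g := by
  subst h; exact heq_of_eq (Subtype.ext hval)

end AuxDev
/-- The assignments `π(u ⊗ τ_{x,y} ⊗ v) = id_{π(u)+x+y+π(v)}` and
`π(u ⊗ α ⊗ v) = (π(u)+π(v), α)` extend the canonical projection `π : X* → [X]`
into a functor `Π` from the free category on `G(Σ²(X,R))` to the free category
on `G(X,R)` (it preserves identities and composition, and takes the stated
values on generating arrows), and this functor is surjective: `π` is surjective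
on objects, and every morphism `F : a → b` of the free category on `G(X,R)` is
the image of some morphism `f : u → v` of the free category on `G(Σ²(X,R))`
with `π(u) = a` and `π(v) = b`. -/
theorem pi_functor_surjective {X A : Type} [LinearOrder X] (S : CWRS X A) :
    ∃ Pi : ∀ u v : List X, GPath (PolyStep S) u v → GPath (CwrsStep S) (pi u) (pi v),
      (∀ u : List X, Pi u u .nil = .nil) ∧
      (∀ (u v w : List X) (p : GPath (PolyStep S) u v) (q : GPath (PolyStep S) v w),
        Pi u w (p.comp q) = (Pi u v p).comp (Pi v w q)) ∧
      (∀ (u v : List X) (f : PolyStep S u v) (x y : X) (hxy : x ≠ y),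
        f.1.2.1 = Cell2.tau x y hxy →
          HEq (Pi u v (.cons f .nil)) (GPath.nil : GPath (CwrsStep S) (pi u) (pi u))) ∧
      (∀ (u v : List X) (f : PolyStep S u v) (α : A), f.1.2.1 = Cell2.rule α →
        ∃ g : CwrsStep S (pi u) (pi v),
          g.1 = (pi f.1.1 + pi f.1.2.2, α) ∧ Pi u v (.cons f .nil) = .cons g .nil) ∧
      Function.Surjective (pi (X := X)) ∧
      (∀ (a b : X →₀ ℕ) (F : GPath (CwrsStep S) a b),
        ∃ (u v : List X) (_ : pi u = a) (_ : pi v = b) (f : GPath (PolyStep S) u v),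
          HEq (Pi u v f) F) := by
  refine ⟨fun u v p => PiF S p, fun u => rfl, fun u v w p q => PiF_comp S p q, ?_, ?_, ?_, ?_⟩
  · intro u v f x y hxy hc
    obtain ⟨h1, h2⟩ := stepPi_tau_heq S f x y hxy hc
    show HEq (PiF S (.cons f .nil)) (GPath.nil : GPath (CwrsStep S) (pi u) (pi u))
    rw [PiF_cons, PiF_nil, GPath.comp_nil]
    exact h2
  · intro u v f α hc
    obtain ⟨⟨h, c, k⟩, hp⟩ := f
    cases hc
    refine ⟨⟨(pi h + pi k, α), ?_, ?_⟩, rfl, ?_⟩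
    · rw [hp.1]; simp only [src1, pi_append, pi_bar]; abel
    · rw [hp.2]; simp only [tgt1, pi_append, pi_bar]; abel
    · show PiF S (.cons ⟨(h, Cell2.rule α, k), hp⟩ .nil) = _
      refine (PiF_cons S _ _).trans ?_
      rfl
  · exact fun a => ⟨bar a, pi_bar a⟩
  · intro a b F
    induction F with
    | @nil a0 =>
      obtain ⟨u, rfl⟩ : ∃ u : List X, pi u = a0 := ⟨bar a0, pi_bar a0⟩
      exact ⟨u, u, rfl, rfl, .nil, heq_of_eq rfl⟩
    | @cons a0 b' b0 g F ih =>
      obtain ⟨u', v, hu', hv, f', hf'⟩ := ih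
      obtain ⟨⟨c, α⟩, ha, hb'⟩ := g
      subst hu'
      subst hv
      set u : List X := bar c ++ bar (S.src α) ++ [] with hu_def
      set w : List X := bar c ++ bar (S.tgt α) ++ [] with hw_def
      have hpu : pi u = c + S.src α := by
        rw [hu_def, pi_append, pi_append, pi_bar, pi_bar, pi_nil, add_zero]
      have hpw : pi w = c + S.tgt α := by
        rw [hw_def, pi_append, pi_append, pi_bar, pi_bar, pi_nil, add_zero]
      have hu : pi u = a0 := hpu.trans ha.symm
      subst hu
      have hww' : pi w = pi u' := hpw.trans hb'.symm
      obtain ⟨pp, hpp⟩ := perm_lift S (perm_of_pi_eq hww')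
      refine ⟨u, v, rfl, rfl, .cons (⟨(bar c, .rule α, []), rfl, rfl⟩ : PolyStep S u w) (pp.comp f'), heq_of_eq ?_⟩
      obtain ⟨hA, hB⟩ := tauOnly_piF S pp hpp
      show PiF S (.cons (⟨(bar c, .rule α, []), rfl, rfl⟩ : PolyStep S u w) (pp.comp f')) = _
      refine (PiF_cons S _ _).trans ((congrArg _ (PiF_comp S pp f')).trans ?_)
      have hFf : PiF S f' = F := eq_of_heq hf'
      rw [hFf]
      refine key_comp hww' _ (PiF S pp) F _ ?_ hB
      refine heq_cons_nil hww' _ _ (cwrs_heq S hww' _ _ ?_)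
      show (pi (bar c) + pi ([] : List X), α) = (c, α)
      rw [pi_bar, pi_nil, add_zero]
end
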